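/- For every natural number N with N ≥ 3, every natural number k with k ≤ N, every real number R with 0 ≤ R ≤ 1, and every real number θ, one has C(N,k) · ( R^(N−k)·(1−R)^k + R^k·(1−R)^(N−k) + 2·(Real.sqrt (R·(1−R)))^N·(−1)^(N−k)·cos θ ) < 2. -/

import Mathlib

lemma two_mul_centralBinom_lt : ∀ k : ℕ, 2 ≤ k → 2 * Nat.centralBinom k < 4 ^ k := by
  intro k
  induction k with
  | zero => omega
  | succ n ih =>
    intro hk
    rcases Nat.lt_or_ge n 2 with h | h
    · interval_cases n
      · omega
      · decide
    · have ih' := ih h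
      have key := Nat.succ_mul_centralBinom_succ n
      have h4 : (0:ℕ) < 4 ^ n := Nat.pow_pos (by norm_num)
      have : (n+1) * (2 * Nat.centralBinom (n+1)) < (n+1) * 4 ^ (n+1) := by
        calc (n+1) * (2 * Nat.centralBinom (n+1)) = 2 * ((n+1) * Nat.centralBinom (n+1)) := by ring
        _ = 2 * (2 * (2*n+1) * Nat.centralBinom n) := by rw [key]
        _ = (2*n+1) * (2 * (2 * Nat.centralBinom n)) := by ring
        _ < (2*n+1) * (2 * 4 ^ n) := by
            exact Nat.mul_lt_mul_of_le_of_lt (le_refl _) (by omega) (by omega)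
        _ ≤ (n+1) * 4 ^ (n+1) := by
            have h2 : 2*n+1 ≤ 2*(n+1) := by omega
            calc (2*n+1) * (2*4^n) ≤ 2*(n+1) * (2*4^n) := Nat.mul_le_mul_right _ h2
            _ = (n+1) * 4^(n+1) := by ring
      exact Nat.lt_of_mul_lt_mul_left this

/-- For every `N ≥ 3`, `k ≤ N`, `0 ≤ R ≤ 1` and real `θ`, the NOON-state product
condition expression is strictly below `2`. -/
theorem noon_expression_lt_two (N k : ℕ) (hN : 3 ≤ N) (hk : k ≤ N)
    (R θ : ℝ) (hR0 : 0 ≤ R) (hR1 : R ≤ 1) :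
    (N.choose k : ℝ) *
      (R ^ (N - k) * (1 - R) ^ k + R ^ k * (1 - R) ^ (N - k) +
        2 * (Real.sqrt (R * (1 - R))) ^ N * (-1 : ℝ) ^ (N - k) * Real.cos θ) < 2 := by
  have hq0 : (0:ℝ) ≤ 1 - R := by linarith
  have hRq : (0:ℝ) ≤ R * (1 - R) := mul_nonneg hR0 hq0
  have hC0 : (0:ℝ) ≤ (N.choose k : ℝ) := Nat.cast_nonneg _
  by_cases hNk : N = 2 * k
  · -- central case
    have hk2 : 2 ≤ k := by omega
    have hNkk : N - k = k := by omega
    have hcb : 2 * (N.choose k : ℝ) < 4 ^ k := by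
      have h := two_mul_centralBinom_lt k hk2
      have he : N.choose k = Nat.centralBinom k := by rw [hNk]; rfl
      rw [he]
      exact_mod_cast h
    have hsk : (Real.sqrt (R * (1 - R))) ^ N = (R * (1 - R)) ^ k := by
      rw [hNk, pow_mul, Real.sq_sqrt hRq]
    have hRk : R ^ k * (1 - R) ^ k = (R * (1 - R)) ^ k := (mul_pow _ _ _).symm
    rw [hNkk, hsk, hRk]
    have hw : |(-1 : ℝ) ^ k * Real.cos θ| ≤ 1 := by
      rw [abs_mul, abs_pow, abs_neg, abs_one, one_pow, one_mul]
      exact Real.abs_cos_le_one θ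
    rw [abs_le] at hw
    set t := (R * (1 - R)) ^ k with htdef
    have ht0 : 0 ≤ t := pow_nonneg hRq k
    have ht4 : t * 4 ^ k ≤ 1 := by
      rw [htdef, ← mul_pow]
      exact pow_le_one₀ (by positivity) (by nlinarith [sq_nonneg (2*R - 1)])
    rcases eq_or_lt_of_le ht0 with h0 | h0
    · rw [← h0]
      norm_num
    · have h4pos : (0:ℝ) < 4 ^ k := by positivity
      nlinarith [mul_nonneg (mul_nonneg hC0 ht0) (sub_nonneg.mpr hw.2),
        mul_pos h0 (sub_pos.mpr hcb),
        mul_le_mul_of_nonneg_left ht4 hC0]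
  · -- k ≠ N - k
    have hw : |(-1 : ℝ) ^ (N - k) * Real.cos θ| ≤ 1 := by
      rw [abs_mul, abs_pow, abs_neg, abs_one, one_pow, one_mul]
      exact Real.abs_cos_le_one θ
    rw [abs_le] at hw
    have hne : N - k ≠ k := by omega
    have hsum : ∑ j ∈ Finset.range (N+1), R ^ j * (1-R) ^ (N-j) * (N.choose j : ℝ) = 1 := by
      have h := add_pow R (1 - R) N
      rw [show R + (1 - R) = 1 by ring, one_pow] at h
      exact h.symm
    have hnonneg : ∀ j ∈ Finset.range (N+1), (0:ℝ) ≤ R ^ j * (1-R) ^ (N-j) * (N.choose j : ℝ) := by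
      intro j _; positivity
    have hpsub : ({N - k, k} : Finset ℕ) ⊆ Finset.range (N+1) := by
      intro x hx
      simp only [Finset.mem_insert, Finset.mem_singleton] at hx
      rcases hx with h | h <;> simp only [Finset.mem_range] <;> omega
    have hpair : R ^ (N-k) * (1-R) ^ k * (N.choose k : ℝ) + R ^ k * (1-R) ^ (N-k) * (N.choose k : ℝ)
        = ∑ j ∈ ({N - k, k} : Finset ℕ), R ^ j * (1-R) ^ (N-j) * (N.choose j : ℝ) := by
      rw [Finset.sum_pair hne, Nat.choose_symm hk, Nat.sub_sub_self hk]
    have hXYle : R ^ (N-k) * (1-R) ^ k * (N.choose k : ℝ) + R ^ k * (1-R) ^ (N-k) * (N.choose k : ℝ) ≤ 1 := by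
      rw [hpair]
      exact le_of_le_of_eq
        (Finset.sum_le_sum_of_subset_of_nonneg hpsub (fun j hj _ => hnonneg j hj)) hsum
    have hNkk : N - k + k = N := Nat.sub_add_cancel hk
    set u := Real.sqrt R ^ (N-k) * Real.sqrt (1-R) ^ k with hudef
    set v := Real.sqrt R ^ k * Real.sqrt (1-R) ^ (N-k) with hvdef
    have hu0 : 0 ≤ u := by positivity
    have hv0 : 0 ≤ v := by positivity
    have hu2 : u ^ 2 = R ^ (N-k) * (1-R) ^ k := by
      rw [hudef, mul_pow, ← pow_mul, ← pow_mul, mul_comm (N-k) 2, mul_comm k 2,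
        pow_mul, pow_mul, Real.sq_sqrt hR0, Real.sq_sqrt hq0]
    have hv2 : v ^ 2 = R ^ k * (1-R) ^ (N-k) := by
      rw [hvdef, mul_pow, ← pow_mul, ← pow_mul, mul_comm (N-k) 2, mul_comm k 2,
        pow_mul, pow_mul, Real.sq_sqrt hR0, Real.sq_sqrt hq0]
    have hs : (Real.sqrt (R * (1 - R))) ^ N = u * v := by
      rw [Real.sqrt_mul hR0, mul_pow, hudef, hvdef,
        show Real.sqrt R ^ (N-k) * Real.sqrt (1-R) ^ k * (Real.sqrt R ^ k * Real.sqrt (1-R) ^ (N-k))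
          = (Real.sqrt R ^ (N-k) * Real.sqrt R ^ k) * (Real.sqrt (1-R) ^ (N-k) * Real.sqrt (1-R) ^ k) from by ring,
        ← pow_add, ← pow_add, hNkk]
    rw [← hu2, ← hv2, hs]
    set C := (N.choose k : ℝ) with hCdef
    have hXYle' : C * u^2 + C * v^2 ≤ 1 := by
      rw [hu2, hv2]; linarith [hXYle]
    by_cases hbz : R * (1 - R) = 0
    · have huv : u * v = 0 := by
        rw [← hs, hbz, Real.sqrt_zero, zero_pow (by omega : N ≠ 0)]
      have heq : C * (u^2 + v^2 + 2 * (u*v) * (-1:ℝ)^(N-k) * Real.cos θ) = C * u^2 + C * v^2 := by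
        rw [huv]; ring
      rw [heq]; linarith
    · have hR0' : 0 < R := lt_of_le_of_ne hR0 (by rintro rfl; simp at hbz)
      have hq0' : 0 < 1 - R := lt_of_le_of_ne hq0 (by intro h; exact hbz (by rw [← h]; ring))
      obtain ⟨j0, hj0r, hj0⟩ : ∃ j0 ∈ Finset.range (N+1), j0 ∉ ({N - k, k} : Finset ℕ) := by
        by_contra hcon
        push_neg at hcon
        have hcard := Finset.card_le_card (fun x hx => hcon x hx)
        have h1 : ({N - k, k} : Finset ℕ).card ≤ 2 := by
          apply le_trans (Finset.card_insert_le _ _); simp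
        simp only [Finset.card_range] at hcard
        omega
      have hj0N : j0 ≤ N := by
        simp only [Finset.mem_range] at hj0r; omega
      have hj0pos : 0 < R ^ j0 * (1-R) ^ (N-j0) * (N.choose j0 : ℝ) := by
        have hcp := Nat.choose_pos hj0N
        positivity
      have hstrict : C * u^2 + C * v^2 < 1 := by
        have hins : ∑ j ∈ insert j0 ({N - k, k} : Finset ℕ), R ^ j * (1-R) ^ (N-j) * (N.choose j : ℝ)
            = R ^ j0 * (1-R) ^ (N-j0) * (N.choose j0 : ℝ)
            + ∑ j ∈ ({N - k, k} : Finset ℕ), R ^ j * (1-R) ^ (N-j) * (N.choose j : ℝ) := by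
          rw [Finset.sum_insert hj0]
        have hsub2 : insert j0 ({N - k, k} : Finset ℕ) ⊆ Finset.range (N+1) := by
          intro x hx
          rcases Finset.mem_insert.mp hx with h | h
          · exact h ▸ hj0r
          · exact hpsub h
        have hle2 : ∑ j ∈ insert j0 ({N - k, k} : Finset ℕ), R ^ j * (1-R) ^ (N-j) * (N.choose j : ℝ) ≤ 1 :=
          le_of_le_of_eq
            (Finset.sum_le_sum_of_subset_of_nonneg hsub2 (fun j hj _ => hnonneg j hj)) hsum
        rw [hu2, hv2]
        linarith [hins, hle2, hj0pos, hpair]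
      nlinarith [mul_nonneg hC0 (sq_nonneg (u - v)),
        mul_nonneg (mul_nonneg (mul_nonneg hC0 hu0) hv0) (sub_nonneg.mpr hw.2)]
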